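/- Let B be an exact Krull–Schmidt Frobenius k-category whose stable category B̄ has finite-dimensional Hom-spaces, and let C be a functorially finite maximal (d−1)-orthogonal subcategory with d ≥ 2 and C̄[d] = C̄. For M ∈ mod-C̄ with projective resolution 0 → B(−,C_{d+1}) → ⋯ → B(−,C₀) → M → 0 in mod-C as in Theorem 2.5(1), the induced sequence of functors on C̄, 0 → Tor^C_{d+1}(M,C̄) → B̄(−,C_{d+1}) → ⋯ → B̄(−,C₀) → M → 0, is exact; hence it gives the first d+2 terms of a projective resolution of M in mod-C̄. -/

import Mathlib

open CategoryTheory CategoryTheory.Limits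

universe v u

/-- Bundled data of an exact Krull–Schmidt Frobenius `k`-category: an additive
`k`-linear category equipped with a class of admissible short exact sequences,
a class of projective(-injective) objects satisfying the usual lifting
properties on both sides (the Frobenius property), chosen projective covers
with syzygies and injective envelopes with cosyzygies (enough projectives and
enough injectives), the Krull--Schmidt property, and Hom-finiteness of the
stable category (Hom's modulo maps factoring through projectives). -/
structure FrobeniusSetup (k : Type) [Field k] (B : Type u) [Category.{v} B] [Preadditive B]
    [CategoryTheory.Linear k B] [HasFiniteBiproducts B] [HasBinaryBiproducts B] : Type (max u v) where
  /-- the admissible short exact sequences `0 → X → Y → Z → 0` of the exact structure -/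
  IsSES : ∀ {X Y Z : B}, (X ⟶ Y) → (Y ⟶ Z) → Prop
  /-- the projective (equivalently injective) objects -/
  Proj : B → Prop
  ses_zero : ∀ {X Y Z : B} (f : X ⟶ Y) (g : Y ⟶ Z), IsSES f g → f ≫ g = 0
  /-- in an admissible short exact sequence, `f` is a kernel of `g` -/
  ses_ker : ∀ {X Y Z : B} (f : X ⟶ Y) (g : Y ⟶ Z), IsSES f g →
      ∀ {W : B} (u : W ⟶ Y), u ≫ g = 0 → ∃! v : W ⟶ X, v ≫ f = u
  /-- in an admissible short exact sequence, `g` is a cokernel of `f` -/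
  ses_coker : ∀ {X Y Z : B} (f : X ⟶ Y) (g : Y ⟶ Z), IsSES f g →
      ∀ {W : B} (u : Y ⟶ W), f ≫ u = 0 → ∃! v : Z ⟶ W, g ≫ v = u
  /-- admissible short exact sequences are closed under isomorphism -/
  ses_iso : ∀ {X Y Z X' Y' Z' : B} (f : X ⟶ Y) (g : Y ⟶ Z)
      (iX : X ≅ X') (iY : Y ≅ Y') (iZ : Z ≅ Z') (f' : X' ⟶ Y') (g' : Y' ⟶ Z'),
      IsSES f g → f ≫ iY.hom = iX.hom ≫ f' → g ≫ iZ.hom = iY.hom ≫ g' → IsSES f' g'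
  /-- split exact sequences are admissible -/
  ses_split : ∀ X Y : B, IsSES (biprod.inl : X ⟶ X ⊞ Y) (biprod.snd : X ⊞ Y ⟶ Y)
  /-- the `Proj` objects are precisely the projective objects of the exact structure -/
  proj_iff : ∀ P : B, Proj P ↔
      (∀ {X Y Z : B} (f : X ⟶ Y) (g : Y ⟶ Z), IsSES f g →
        ∀ h : P ⟶ Z, ∃ l : P ⟶ Y, l ≫ g = h)
  /-- the Frobenius property: `Proj` objects are precisely the injective objects -/
  inj_iff : ∀ P : B, Proj P ↔
      (∀ {X Y Z : B} (f : X ⟶ Y) (g : Y ⟶ Z), IsSES f g →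
        ∀ h : X ⟶ P, ∃ l : Y ⟶ P, f ≫ l = h)
  /-- a chosen projective cover (enough projectives) -/
  P : B → B
  projP : ∀ X : B, Proj (P X)
  pr : ∀ X : B, P X ⟶ X
  /-- the chosen syzygy -/
  syz : B → B
  syzMono : ∀ X : B, syz X ⟶ P X
  ses_syz : ∀ X : B, IsSES (syzMono X) (pr X)
  /-- a chosen injective envelope (enough injectives) -/
  I : B → B
  projI : ∀ X : B, Proj (I X)
  en : ∀ X : B, X ⟶ I X
  /-- the chosen cosyzygy, i.e. the suspension of the stable category -/
  cosyz : B → B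
  cosyzEpi : ∀ X : B, I X ⟶ cosyz X
  ses_cosyz : ∀ X : B, IsSES (en X) (cosyzEpi X)
  /-- the Krull–Schmidt property: every object is a finite biproduct of objects
  with local endomorphism rings -/
  krullSchmidt : ∀ X : B, ∃ (n : ℕ) (Y : Fin n → B),
      (∀ i, IsLocalRing (End (Y i))) ∧ Nonempty (X ≅ ⨁ Y)
  /-- Hom-finiteness of the stable category -/
  homFinite : ∀ X Y : B, FiniteDimensional k
      ((X ⟶ Y) ⧸ Submodule.span k
        {f : X ⟶ Y | ∃ (Q : B) (g : X ⟶ Q) (h : Q ⟶ Y), Proj Q ∧ f = g ≫ h})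

namespace FrobeniusSetup

variable {k : Type} [Field k] {B : Type u} [Category.{v} B] [Preadditive B]
  [CategoryTheory.Linear k B] [HasFiniteBiproducts B] [HasBinaryBiproducts B] (S : FrobeniusSetup k B)

/-- The ideal of maps factoring through a projective object. -/
def projIdeal (X Y : B) : Submodule k (X ⟶ Y) :=
  Submodule.span k {f : X ⟶ Y | ∃ (Q : B) (g : X ⟶ Q) (h : Q ⟶ Y), S.Proj Q ∧ f = g ≫ h}

/-- Stable Hom: morphisms in the stable category `B̄`. -/
def sHom (X Y : B) : Type v := (X ⟶ Y) ⧸ S.projIdeal X Y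

noncomputable instance (X Y : B) : AddCommGroup (S.sHom X Y) :=
  inferInstanceAs (AddCommGroup ((X ⟶ Y) ⧸ S.projIdeal X Y))

noncomputable instance (X Y : B) : Module k (S.sHom X Y) :=
  inferInstanceAs (Module k ((X ⟶ Y) ⧸ S.projIdeal X Y))

/-- The class of a morphism in the stable category. -/
def sMk {X Y : B} (f : X ⟶ Y) : S.sHom X Y := Submodule.Quotient.mk f

/-- Vanishing of the stable Hom-space `B̄(X,Y)`. -/
def sVanish (X Y : B) : Prop := S.projIdeal X Y = ⊤

/-- `X` and `Y` are isomorphic in the stable category `B̄`. -/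
def StIso (X Y : B) : Prop :=
  ∃ (f : X ⟶ Y) (g : Y ⟶ X),
    f ≫ g - 𝟙 X ∈ S.projIdeal X X ∧ g ≫ f - 𝟙 Y ∈ S.projIdeal Y Y

/-- The shift (suspension) `X[n]` in the stable category: iterated cosyzygies for
`n ≥ 0` and iterated syzygies for `n < 0`. -/
def shift : ℤ → B → B
  | Int.ofNat n, X => S.cosyz^[n] X
  | Int.negSucc n, X => S.syz^[n + 1] X

/-- `Ext^i_B(X,Y) = 0`, expressed via the standard identification
`Ext^i(X,Y) ≅ B̄(Ω^i X, Y)` for `i ≥ 1` valid in a Frobenius category. -/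
def extVanish (i : ℕ) (X Y : B) : Prop := S.sVanish (S.syz^[i] X) Y

/-- `C` is a maximal `(d-1)`-orthogonal subcategory of `B`. -/
def MaxOrthogonal (C : Set B) (d : ℕ) : Prop :=
  (∀ X : B, X ∈ C ↔ ∀ i : ℕ, 1 ≤ i → i < d → ∀ C₀ ∈ C, S.extVanish i X C₀) ∧
  (∀ Y : B, Y ∈ C ↔ ∀ i : ℕ, 1 ≤ i → i < d → ∀ C₀ ∈ C, S.extVanish i C₀ Y)

/-- `C` is functorially finite in `B`: every object admits a right and a left
`C`-approximation. -/
def FunctoriallyFinite (_S : FrobeniusSetup k B) (C : Set B) : Prop :=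
  (∀ X : B, ∃ C₀ ∈ C, ∃ f : C₀ ⟶ X, ∀ C₁ ∈ C, ∀ g : C₁ ⟶ X, ∃ h : C₁ ⟶ C₀, h ≫ f = g) ∧
  (∀ X : B, ∃ C₀ ∈ C, ∃ f : X ⟶ C₀, ∀ C₁ ∈ C, ∀ g : X ⟶ C₁, ∃ h : C₀ ⟶ C₁, f ≫ h = g)

/-- The subcategory `E_j = {X | B̄(C, X[i]) = 0 for 1 ≤ i ≤ d-1, i ≠ j}`. -/
def Esub (C : Set B) (d j : ℕ) : Set B :=
  {X : B | ∀ i : ℕ, 1 ≤ i → i ≤ d - 1 → i ≠ j → ∀ C₀ ∈ C, S.sVanish C₀ (S.cosyz^[i] X)}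

/-- `C̄[d] = C̄`: the `d`-th syzygy of every object of `C` again lies in `C`,
up to stable isomorphism (i.e. up to projective summands). -/
def ShiftStable (C : Set B) (d : ℕ) : Prop :=
  ∀ C₀ ∈ C, ∃ C₁ ∈ C, S.StIso (S.syz^[d] C₀) C₁

end FrobeniusSetup
namespace FrobeniusSetup

section FunctorCats

variable {k : Type} [Field k] {B : Type u} [Category.{v} B] [Preadditive B]
  [CategoryTheory.Linear k B] [HasFiniteBiproducts B] [HasBinaryBiproducts B]
  (S : FrobeniusSetup k B)

/-- Postcomposition on stable Hom's. -/
noncomputable def sComp (X : B) {Y Z : B} (w : Y ⟶ Z) : S.sHom X Y →ₗ[k] S.sHom X Z :=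
  Submodule.mapQ _ _ (Linear.rightComp k X w) (by
    simp only [projIdeal, Submodule.span_le]
    rintro f ⟨Q, g, h, hQ, rfl⟩
    exact Submodule.mem_comap.2 (Submodule.subset_span ⟨Q, g, h ≫ w, hQ, by simp⟩))

/-- Precomposition on stable Hom's. -/
noncomputable def sPre {W X : B} (u : W ⟶ X) (Y : B) : S.sHom X Y →ₗ[k] S.sHom W Y :=
  Submodule.mapQ _ _ (Linear.leftComp k Y u) (by
    simp only [projIdeal, Submodule.span_le]
    rintro f ⟨Q, g, h, hQ, rfl⟩
    exact Submodule.mem_comap.2 (Submodule.subset_span ⟨Q, u ≫ g, h, hQ, by simp⟩))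

@[simp] lemma sComp_mk (X : B) {Y Z : B} (w : Y ⟶ Z) (f : X ⟶ Y) :
    S.sComp X w (S.sMk f) = S.sMk (f ≫ w) := rfl

@[simp] lemma sPre_mk {W X : B} (u : W ⟶ X) (Y : B) (f : X ⟶ Y) :
    S.sPre u Y (S.sMk f) = S.sMk (u ≫ f) := rfl

variable (CC : Set B)

/-- The restriction to `C` of the representable functor `B(-,X)`; for `X ∈ C`
these are exactly the projective objects of `mod-C`. -/
def LinRep (X : B) : (ObjectProperty.FullSubcategory (· ∈ CC))ᵒᵖ ⥤ ModuleCat k :=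
  (ObjectProperty.ι (· ∈ CC)).op ⋙ (linearYoneda k B).obj X

/-- The natural transformation `B(-,X) ⟶ B(-,Y)` induced by `w : X ⟶ Y`. -/
def lMap {X Y : B} (w : X ⟶ Y) : LinRep (k := k) CC X ⟶ LinRep CC Y :=
  Functor.whiskerLeft (ObjectProperty.ι (· ∈ CC)).op
    ((linearYoneda k B).map w)

/-- The restriction to `C̄` of the stable representable functor `B̄(-,X)`. -/
noncomputable def SRep (X : B) : (ObjectProperty.FullSubcategory (· ∈ CC))ᵒᵖ ⥤ ModuleCat k where
  obj c := ModuleCat.of k (S.sHom c.unop.obj X)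
  map {c c'} u := ModuleCat.ofHom (S.sPre (u.unop.hom : c'.unop.obj ⟶ c.unop.obj) X)
  map_id c := by
    ext x
    obtain ⟨f, rfl⟩ := Submodule.Quotient.mk_surjective _ x
    show S.sMk ((𝟙 c.unop.obj : c.unop.obj ⟶ c.unop.obj) ≫ f) = S.sMk f
    rw [Category.id_comp]
  map_comp {c c' c''} u v := by
    ext x
    obtain ⟨f, rfl⟩ := Submodule.Quotient.mk_surjective _ x
    show S.sMk (((v.unop.hom : c''.unop.obj ⟶ c'.unop.obj) ≫
        (u.unop.hom : c'.unop.obj ⟶ c.unop.obj)) ≫ f)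
      = S.sMk ((v.unop.hom : c''.unop.obj ⟶ c'.unop.obj) ≫
        ((u.unop.hom : c'.unop.obj ⟶ c.unop.obj) ≫ f))
    rw [Category.assoc]

/-- The natural transformation `B̄(-,X) ⟶ B̄(-,Y)` induced by `w : X ⟶ Y`. -/
noncomputable def sMap {X Y : B} (w : X ⟶ Y) : S.SRep CC X ⟶ S.SRep CC Y where
  app c := ModuleCat.ofHom (S.sComp c.unop.obj w)
  naturality {c c'} u := by
    ext x
    obtain ⟨f, rfl⟩ := Submodule.Quotient.mk_surjective _ x
    show S.sMk (((u.unop.hom : c'.unop.obj ⟶ c.unop.obj) ≫ f) ≫ w)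
      = S.sMk ((u.unop.hom : c'.unop.obj ⟶ c.unop.obj) ≫ (f ≫ w))
    rw [Category.assoc]

/-- A functor on `C` underlies a functor on the stable category `C̄` iff it kills
all maps factoring through a projective object of `B`. -/
def KillsProj (M : (ObjectProperty.FullSubcategory (· ∈ CC))ᵒᵖ ⥤ ModuleCat k) : Prop :=
  ∀ (c c' : (ObjectProperty.FullSubcategory (· ∈ CC))ᵒᵖ) (u : c ⟶ c'),
    (u.unop.hom : c'.unop.obj ⟶ c.unop.obj) ∈ S.projIdeal c'.unop.obj c.unop.obj → M.map u = 0

/-- `M` is a finitely presented k-linear contravariant functor on the stable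
category `C̄`, i.e. an object of `mod-C̄`: it admits a projective presentation
`B̄(-,C₁) → B̄(-,C₀) → M → 0` by (restricted) stable representables. -/
def IsFPStable (M : (ObjectProperty.FullSubcategory (· ∈ CC))ᵒᵖ ⥤ ModuleCat k) : Prop :=
  ∃ (C₁ C₀ : B), C₁ ∈ CC ∧ C₀ ∈ CC ∧
    ∃ (φ : S.SRep CC C₁ ⟶ S.SRep CC C₀) (ε : S.SRep CC C₀ ⟶ M),
      ∀ c, Function.Surjective (ε.app c) ∧ Function.Exact (φ.app c) (ε.app c)

/-- `M` is a finitely presented k-linear contravariant functor on `C`,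
i.e. an object of `mod-C`. -/
def IsFP (M : (ObjectProperty.FullSubcategory (· ∈ CC))ᵒᵖ ⥤ ModuleCat k) : Prop :=
  ∃ (C₁ C₀ : B), C₁ ∈ CC ∧ C₀ ∈ CC ∧
    ∃ (φ : LinRep (k := k) CC C₁ ⟶ LinRep CC C₀) (ε : LinRep (k := k) CC C₀ ⟶ M),
      ∀ c, Function.Surjective (ε.app c) ∧ Function.Exact (φ.app c) (ε.app c)

end FunctorCats

end FrobeniusSetup

namespace FrobeniusSetup

section Aux

variable {k : Type} [Field k] {B : Type u} [Category.{v} B] [Preadditive B]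
  [CategoryTheory.Linear k B] [HasFiniteBiproducts B] [HasBinaryBiproducts B]
  (S : FrobeniusSetup k B)

lemma mem_projIdeal_of_factor {X Y Q : B} (hQ : S.Proj Q) (a : X ⟶ Q) (b : Q ⟶ Y) :
    a ≫ b ∈ S.projIdeal X Y :=
  Submodule.subset_span ⟨Q, a, b, hQ, rfl⟩

lemma projIdeal_postcomp {X Y Z : B} {p : X ⟶ Y} (hp : p ∈ S.projIdeal X Y) (w : Y ⟶ Z) :
    p ≫ w ∈ S.projIdeal X Z := by
  induction hp using Submodule.span_induction with
  | mem f hf =>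
    obtain ⟨Q, a, b, hQ, rfl⟩ := hf
    rw [Category.assoc]
    exact S.mem_projIdeal_of_factor hQ a (b ≫ w)
  | zero => rw [Limits.zero_comp]; exact zero_mem _
  | add f f' _ _ hf hf' => rw [Preadditive.add_comp]; exact add_mem hf hf'
  | smul a f _ hf => rw [Linear.smul_comp]; exact Submodule.smul_mem _ _ hf

lemma projIdeal_precomp {X Y W : B} {p : X ⟶ Y} (hp : p ∈ S.projIdeal X Y) (u : W ⟶ X) :
    u ≫ p ∈ S.projIdeal W Y := by
  induction hp using Submodule.span_induction with
  | mem f hf =>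
    obtain ⟨Q, a, b, hQ, rfl⟩ := hf
    rw [← Category.assoc]
    exact S.mem_projIdeal_of_factor hQ (u ≫ a) b
  | zero => rw [Limits.comp_zero]; exact zero_mem _
  | add f f' _ _ hf hf' => rw [Preadditive.comp_add]; exact add_mem hf hf'
  | smul a f _ hf => rw [Linear.comp_smul]; exact Submodule.smul_mem _ _ hf

lemma ses_mono' {X Y Z : B} {f : X ⟶ Y} {g : Y ⟶ Z} (h : S.IsSES f g) {W : B} {a b : W ⟶ X}
    (hab : a ≫ f = b ≫ f) : a = b := by
  obtain ⟨v, -, huniq⟩ := S.ses_ker f g h (a ≫ f)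
    (by rw [Category.assoc, S.ses_zero f g h, Limits.comp_zero])
  exact (huniq a rfl).trans (huniq b hab.symm).symm

lemma ses_epi' {X Y Z : B} {f : X ⟶ Y} {g : Y ⟶ Z} (h : S.IsSES f g) {W : B} {a b : Z ⟶ W}
    (hab : g ≫ a = g ≫ b) : a = b := by
  obtain ⟨v, -, huniq⟩ := S.ses_coker f g h (g ≫ a)
    (by rw [← Category.assoc, S.ses_zero f g h, Limits.zero_comp])
  exact (huniq a rfl).trans (huniq b hab.symm).symm

lemma ker_fac {X Y Z : B} {f : X ⟶ Y} {g : Y ⟶ Z} (h : S.IsSES f g) {W : B} (u : W ⟶ Y)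
    (hu : u ≫ g = 0) : ∃ v : W ⟶ X, v ≫ f = u :=
  (S.ses_ker f g h u hu).exists

lemma coker_fac {X Y Z : B} {f : X ⟶ Y} {g : Y ⟶ Z} (h : S.IsSES f g) {W : B} (u : Y ⟶ W)
    (hu : f ≫ u = 0) : ∃ v : Z ⟶ W, g ≫ v = u :=
  (S.ses_coker f g h u hu).exists

lemma proj_lift {Q : B} (hQ : S.Proj Q) {X Y Z : B} {f : X ⟶ Y} {g : Y ⟶ Z} (h : S.IsSES f g)
    (u : Q ⟶ Z) : ∃ l : Q ⟶ Y, l ≫ g = u :=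
  (S.proj_iff Q).mp hQ f g h u

lemma proj_ext {Q : B} (hQ : S.Proj Q) {X Y Z : B} {f : X ⟶ Y} {g : Y ⟶ Z} (h : S.IsSES f g)
    (u : X ⟶ Q) : ∃ l : Y ⟶ Q, f ≫ l = u :=
  (S.inj_iff Q).mp hQ f g h u

lemma projIdeal_ext {X Y Z W : B} {f : X ⟶ Y} {g : Y ⟶ Z} (hses : S.IsSES f g)
    {p : X ⟶ W} (hp : p ∈ S.projIdeal X W) : ∃ F : Y ⟶ W, f ≫ F = p := by
  induction hp using Submodule.span_induction with
  | mem q hq =>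
    obtain ⟨Q, a, b, hQ, rfl⟩ := hq
    obtain ⟨A, hA⟩ := S.proj_ext hQ hses a
    exact ⟨A ≫ b, by rw [← Category.assoc, hA]⟩
  | zero => exact ⟨0, Limits.comp_zero⟩
  | add q q' _ _ hq hq' =>
    obtain ⟨F, hF⟩ := hq; obtain ⟨F', hF'⟩ := hq'
    exact ⟨F + F', by rw [Preadditive.comp_add, hF, hF']⟩
  | smul a q _ hq =>
    obtain ⟨F, hF⟩ := hq
    exact ⟨a • F, by rw [Linear.comp_smul, hF]⟩

lemma projIdeal_lift {W X Y Z : B} {f : X ⟶ Y} {g : Y ⟶ Z} (hses : S.IsSES f g)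
    {p : W ⟶ Z} (hp : p ∈ S.projIdeal W Z) : ∃ G : W ⟶ Y, G ≫ g = p := by
  induction hp using Submodule.span_induction with
  | mem q hq =>
    obtain ⟨Q, a, b, hQ, rfl⟩ := hq
    obtain ⟨l, hl⟩ := S.proj_lift hQ hses b
    exact ⟨a ≫ l, by rw [Category.assoc, hl]⟩
  | zero => exact ⟨0, Limits.zero_comp⟩
  | add q q' _ _ hq hq' =>
    obtain ⟨G, hG⟩ := hq; obtain ⟨G', hG'⟩ := hq'
    exact ⟨G + G', by rw [Preadditive.add_comp, hG, hG']⟩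
  | smul a q _ hq =>
    obtain ⟨G, hG⟩ := hq
    exact ⟨a • G, by rw [Linear.smul_comp, hG]⟩

lemma proj_of_retract {X Q : B} (hQ : S.Proj Q) (r : X ⟶ Q) (s : Q ⟶ X) (hrs : r ≫ s = 𝟙 X) :
    S.Proj X := by
  rw [S.proj_iff]
  intro A Y Z f g hses h
  obtain ⟨l, hl⟩ := S.proj_lift hQ hses (s ≫ h)
  exact ⟨r ≫ l, by rw [Category.assoc, hl, ← Category.assoc, hrs, Category.id_comp]⟩

lemma proj_syz {X : B} (hX : S.Proj X) : S.Proj (S.syz X) := by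
  obtain ⟨l, hl⟩ := S.proj_lift hX (S.ses_syz X) (𝟙 X)
  have he : (𝟙 (S.P X) - S.pr X ≫ l) ≫ S.pr X = 0 := by
    rw [Preadditive.sub_comp, Category.id_comp, Category.assoc, hl, Category.comp_id, sub_self]
  obtain ⟨v, hv⟩ := S.ker_fac (S.ses_syz X) _ he
  refine S.proj_of_retract (S.projP X) (S.syzMono X) v ?_
  apply S.ses_mono' (S.ses_syz X)
  rw [Category.assoc, hv, Preadditive.comp_sub, Category.comp_id, ← Category.assoc,
    S.ses_zero _ _ (S.ses_syz X), Limits.zero_comp, sub_zero, Category.id_comp]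

lemma proj_syz_iter {X : B} (hX : S.Proj X) (n : ℕ) : S.Proj (S.syz^[n] X) := by
  induction n with
  | zero => simpa using hX
  | succ n ih => rw [Function.iterate_succ_apply']; exact S.proj_syz ih

lemma mem_projIdeal_of_proj {X Y : B} (hX : S.Proj X) (f : X ⟶ Y) : f ∈ S.projIdeal X Y := by
  simpa using S.mem_projIdeal_of_factor hX (𝟙 X) f

lemma sVanish_of_proj {X : B} (hX : S.Proj X) (Y : B) : S.sVanish X Y :=
  Submodule.eq_top_iff'.mpr fun f => S.mem_projIdeal_of_proj hX f

lemma mem_of_sVanish {X Y : B} (h : S.sVanish X Y) (f : X ⟶ Y) : f ∈ S.projIdeal X Y := by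
  have h' : S.projIdeal X Y = ⊤ := h
  rw [h']; trivial

lemma proj_mem_C {d : ℕ} {C : Set B} (hmax : S.MaxOrthogonal C d) {Q : B} (hQ : S.Proj Q) :
    Q ∈ C :=
  (hmax.1 Q).mpr fun i _ _ C₀ _ => S.sVanish_of_proj (S.proj_syz_iter hQ i) C₀

end Aux

end FrobeniusSetup
namespace FrobeniusSetup

section Aux2

variable {k : Type} [Field k] {B : Type u} [Category.{v} B] [Preadditive B]
  [CategoryTheory.Linear k B] [HasFiniteBiproducts B] [HasBinaryBiproducts B]
  (S : FrobeniusSetup k B)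

lemma stIso_refl (X : B) : S.StIso X X :=
  ⟨𝟙 X, 𝟙 X, by simp, by simp⟩

lemma stIso_symm {X Y : B} (h : S.StIso X Y) : S.StIso Y X := by
  obtain ⟨f, g, h1, h2⟩ := h
  exact ⟨g, f, h2, h1⟩

lemma stIso_trans {X Y Z : B} (hXY : S.StIso X Y) (hYZ : S.StIso Y Z) : S.StIso X Z := by
  obtain ⟨f₁, g₁, h1, h1'⟩ := hXY
  obtain ⟨f₂, g₂, h2, h2'⟩ := hYZ
  refine ⟨f₁ ≫ f₂, g₂ ≫ g₁, ?_, ?_⟩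
  · have he : (f₁ ≫ f₂) ≫ g₂ ≫ g₁ - 𝟙 X
        = f₁ ≫ ((f₂ ≫ g₂ - 𝟙 Y) ≫ g₁) + (f₁ ≫ g₁ - 𝟙 X) := by
      simp only [Preadditive.comp_add, Preadditive.add_comp, Preadditive.comp_sub,
        Preadditive.sub_comp, Category.id_comp, Category.comp_id, Category.assoc]
      abel
    rw [he]
    exact add_mem (S.projIdeal_precomp (S.projIdeal_postcomp h2 g₁) f₁) h1
  · have he : (g₂ ≫ g₁) ≫ f₁ ≫ f₂ - 𝟙 Z
        = g₂ ≫ ((g₁ ≫ f₁ - 𝟙 Y) ≫ f₂) + (g₂ ≫ f₂ - 𝟙 Z) := by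
      simp only [Preadditive.comp_add, Preadditive.add_comp, Preadditive.comp_sub,
        Preadditive.sub_comp, Category.id_comp, Category.comp_id, Category.assoc]
      abel
    rw [he]
    exact add_mem (S.projIdeal_precomp (S.projIdeal_postcomp h1' f₂) g₂) h2'

lemma sVanish_congr_left {X X' Y : B} (h : S.StIso X X') (hv : S.sVanish X Y) :
    S.sVanish X' Y := by
  obtain ⟨f₀, g₀, _, hgf⟩ := h
  refine Submodule.eq_top_iff'.mpr fun p => ?_
  have h1 : g₀ ≫ (f₀ ≫ p) ∈ S.projIdeal X' Y :=
    S.projIdeal_precomp (S.mem_of_sVanish hv (f₀ ≫ p)) g₀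
  have h2 : (g₀ ≫ f₀ - 𝟙 X') ≫ p ∈ S.projIdeal X' Y := S.projIdeal_postcomp hgf p
  have he : p = g₀ ≫ (f₀ ≫ p) - (g₀ ≫ f₀ - 𝟙 X') ≫ p := by
    simp only [Preadditive.sub_comp, Category.id_comp, Category.assoc]
    abel
  rw [he]
  exact sub_mem h1 h2

lemma sVanish_congr_right {X Y Y' : B} (h : S.StIso Y Y') (hv : S.sVanish X Y) :
    S.sVanish X Y' := by
  obtain ⟨f₀, g₀, _, hgf⟩ := h
  refine Submodule.eq_top_iff'.mpr fun p => ?_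
  have h1 : (p ≫ g₀) ≫ f₀ ∈ S.projIdeal X Y' :=
    S.projIdeal_postcomp (S.mem_of_sVanish hv (p ≫ g₀)) f₀
  have h2 : p ≫ (g₀ ≫ f₀ - 𝟙 Y') ∈ S.projIdeal X Y' := S.projIdeal_precomp hgf p
  have he : p = (p ≫ g₀) ≫ f₀ - p ≫ (g₀ ≫ f₀ - 𝟙 Y') := by
    simp only [Preadditive.comp_sub, Category.comp_id, Category.assoc]
    abel
  rw [he]
  exact sub_mem h1 h2

/-- `Σ Ω Y` is stably isomorphic to `Y`. -/
lemma stIso_cosyz_syz (Y : B) : S.StIso (S.cosyz (S.syz Y)) Y := by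
  set Z := S.syz Y with hZ
  obtain ⟨u, hu⟩ := S.proj_ext (S.projP Y) (S.ses_cosyz Z) (S.syzMono Y)
  obtain ⟨v, hv⟩ := S.coker_fac (S.ses_cosyz Z) (u ≫ S.pr Y)
    (by rw [← Category.assoc, hu, S.ses_zero _ _ (S.ses_syz Y)])
  obtain ⟨u', hu'⟩ := S.proj_ext (S.projI Z) (S.ses_syz Y) (S.en Z)
  obtain ⟨w, hw⟩ := S.coker_fac (S.ses_syz Y) (u' ≫ S.cosyzEpi Z)
    (by rw [← Category.assoc, hu', S.ses_zero _ _ (S.ses_cosyz Z)])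
  refine ⟨v, w, ?_, ?_⟩
  · -- v ≫ w - 𝟙 (cosyz Z) ∈ P
    have h1 : S.en Z ≫ (u ≫ u' - 𝟙 (S.I Z)) = 0 := by
      rw [Preadditive.comp_sub, ← Category.assoc, hu, hu', Category.comp_id, sub_self]
    obtain ⟨t, ht⟩ := S.coker_fac (S.ses_cosyz Z) _ h1
    have h2 : S.cosyzEpi Z ≫ (v ≫ w) = S.cosyzEpi Z ≫ (𝟙 _ + t ≫ S.cosyzEpi Z) := by
      rw [← Category.assoc, hv, Category.assoc, hw, ← Category.assoc,
        Preadditive.comp_add, Category.comp_id, ← Category.assoc, ht,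
        Preadditive.sub_comp, Category.id_comp]
      abel
    have h3 := S.ses_epi' (S.ses_cosyz Z) h2
    rw [h3, add_sub_cancel_left]
    exact S.mem_projIdeal_of_factor (S.projI Z) t (S.cosyzEpi Z)
  · -- w ≫ v - 𝟙 Y ∈ P
    have h1 : S.syzMono Y ≫ (u' ≫ u - 𝟙 (S.P Y)) = 0 := by
      rw [Preadditive.comp_sub, ← Category.assoc, hu', hu, Category.comp_id, sub_self]
    obtain ⟨s, hs⟩ := S.coker_fac (S.ses_syz Y) _ h1
    have h2 : S.pr Y ≫ (w ≫ v) = S.pr Y ≫ (𝟙 _ + s ≫ S.pr Y) := by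
      rw [← Category.assoc, hw, Category.assoc, hv, ← Category.assoc,
        Preadditive.comp_add, Category.comp_id, ← Category.assoc, hs,
        Preadditive.sub_comp, Category.id_comp]
      abel
    have h3 := S.ses_epi' (S.ses_syz Y) h2
    rw [h3, add_sub_cancel_left]
    exact S.mem_projIdeal_of_factor (S.projP Y) s (S.pr Y)

/-- `Ω Σ X` is stably isomorphic to `X`. -/
lemma stIso_syz_cosyz (X : B) : S.StIso (S.syz (S.cosyz X)) X := by
  set Z := S.cosyz X with hZ
  obtain ⟨u, hu⟩ := S.proj_lift (S.projI X) (S.ses_syz Z) (S.cosyzEpi X)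
  obtain ⟨α, hα⟩ := S.ker_fac (S.ses_syz Z) (S.en X ≫ u)
    (by rw [Category.assoc, hu, S.ses_zero _ _ (S.ses_cosyz X)])
  obtain ⟨u', hu'⟩ := S.proj_lift (S.projP Z) (S.ses_cosyz X) (S.pr Z)
  obtain ⟨β, hβ⟩ := S.ker_fac (S.ses_cosyz X) (S.syzMono Z ≫ u')
    (by rw [Category.assoc, hu', S.ses_zero _ _ (S.ses_syz Z)])
  refine ⟨β, α, ?_, ?_⟩
  · -- β ≫ α - 𝟙 (syz Z) ∈ P
    have h1 : (u' ≫ u - 𝟙 (S.P Z)) ≫ S.pr Z = 0 := by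
      rw [Preadditive.sub_comp, Category.assoc, hu, hu', Category.id_comp, sub_self]
    obtain ⟨z, hz⟩ := S.ker_fac (S.ses_syz Z) _ h1
    have h2 : (β ≫ α) ≫ S.syzMono Z = (𝟙 _ + S.syzMono Z ≫ z) ≫ S.syzMono Z := by
      rw [Category.assoc, hα, ← Category.assoc, hβ, Category.assoc,
        Preadditive.add_comp, Category.id_comp, Category.assoc, hz,
        Preadditive.comp_sub, Category.comp_id]
      abel
    have h3 := S.ses_mono' (S.ses_syz Z) h2
    rw [h3, add_sub_cancel_left]
    exact S.mem_projIdeal_of_factor (S.projP Z) (S.syzMono Z) z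
  · -- α ≫ β - 𝟙 X ∈ P
    have h1 : (u ≫ u' - 𝟙 (S.I X)) ≫ S.cosyzEpi X = 0 := by
      rw [Preadditive.sub_comp, Category.assoc, hu', hu, Category.id_comp, sub_self]
    obtain ⟨y, hy⟩ := S.ker_fac (S.ses_cosyz X) _ h1
    have h2 : (α ≫ β) ≫ S.en X = (𝟙 _ + S.en X ≫ y) ≫ S.en X := by
      rw [Category.assoc, hβ, ← Category.assoc, hα, Category.assoc,
        Preadditive.add_comp, Category.id_comp, Category.assoc, hy,
        Preadditive.comp_sub, Category.comp_id]
      abel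
    have h3 := S.ses_mono' (S.ses_cosyz X) h2
    rw [h3, add_sub_cancel_left]
    exact S.mem_projIdeal_of_factor (S.projI X) (S.en X) y

end Aux2

end FrobeniusSetup
namespace FrobeniusSetup

section Aux3

variable {k : Type} [Field k] {B : Type u} [Category.{v} B] [Preadditive B]
  [CategoryTheory.Linear k B] [HasFiniteBiproducts B] [HasBinaryBiproducts B]
  (S : FrobeniusSetup k B)

/-- If `B̄(Ω X, Y) = 0` then `B̄(X, Σ Y) = 0`. -/
lemma sVanish_syz_to_cosyz {X Y : B} (h : S.sVanish (S.syz X) Y) :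
    S.sVanish X (S.cosyz Y) := by
  refine Submodule.eq_top_iff'.mpr fun p => ?_
  obtain ⟨u, hu⟩ := S.proj_lift (S.projP X) (S.ses_cosyz Y) (S.pr X ≫ p)
  obtain ⟨f, hf⟩ := S.ker_fac (S.ses_cosyz Y) (S.syzMono X ≫ u)
    (by rw [Category.assoc, hu, ← Category.assoc, S.ses_zero _ _ (S.ses_syz X),
      Limits.zero_comp])
  obtain ⟨F, hF⟩ := S.projIdeal_ext (S.ses_syz X) (S.mem_of_sVanish h f)
  have h1 : S.syzMono X ≫ (u - F ≫ S.en Y) = 0 := by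
    rw [Preadditive.comp_sub, ← Category.assoc, hF, hf, sub_self]
  obtain ⟨v, hv⟩ := S.coker_fac (S.ses_syz X) _ h1
  have h2 : S.pr X ≫ p = S.pr X ≫ (v ≫ S.cosyzEpi Y) := by
    rw [← hu, ← Category.assoc, hv, Preadditive.sub_comp, Category.assoc,
      S.ses_zero _ _ (S.ses_cosyz Y), Limits.comp_zero, sub_zero]
  rw [S.ses_epi' (S.ses_syz X) h2]
  exact S.mem_projIdeal_of_factor (S.projI Y) v (S.cosyzEpi Y)

/-- If `B̄(X, Σ Y) = 0` then `B̄(Ω X, Y) = 0`. -/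
lemma sVanish_cosyz_to_syz {X Y : B} (h : S.sVanish X (S.cosyz Y)) :
    S.sVanish (S.syz X) Y := by
  refine Submodule.eq_top_iff'.mpr fun f => ?_
  obtain ⟨u, hu⟩ := S.proj_ext (S.projI Y) (S.ses_syz X) (f ≫ S.en Y)
  obtain ⟨g, hg⟩ := S.coker_fac (S.ses_syz X) (u ≫ S.cosyzEpi Y)
    (by rw [← Category.assoc, hu, Category.assoc, S.ses_zero _ _ (S.ses_cosyz Y),
      Limits.comp_zero])
  obtain ⟨G, hG⟩ := S.projIdeal_lift (S.ses_cosyz Y) (S.mem_of_sVanish h g)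
  have h1 : (u - S.pr X ≫ G) ≫ S.cosyzEpi Y = 0 := by
    rw [Preadditive.sub_comp, Category.assoc, hG, hg, sub_self]
  obtain ⟨v, hv⟩ := S.ker_fac (S.ses_cosyz Y) _ h1
  have h2 : f ≫ S.en Y = (S.syzMono X ≫ v) ≫ S.en Y := by
    rw [← hu, Category.assoc, hv, Preadditive.comp_sub, ← Category.assoc,
      S.ses_zero _ _ (S.ses_syz X), Limits.zero_comp, sub_zero]
  rw [S.ses_mono' (S.ses_cosyz Y) h2]
  exact S.mem_projIdeal_of_factor (S.projP X) (S.syzMono X) v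

/-- `F : Σ X ⟶ Σ Y` is induced by `f : X ⟶ Y`. -/
def IsCosyzPair {X Y : B} (f : X ⟶ Y) (F : S.cosyz X ⟶ S.cosyz Y) : Prop :=
  ∃ u : S.I X ⟶ S.I Y, S.en X ≫ u = f ≫ S.en Y ∧ u ≫ S.cosyzEpi Y = S.cosyzEpi X ≫ F

lemma cosyzPair_exists {X Y : B} (f : X ⟶ Y) : ∃ F, S.IsCosyzPair f F := by
  obtain ⟨u, hu⟩ := S.proj_ext (S.projI Y) (S.ses_cosyz X) (f ≫ S.en Y)
  obtain ⟨F, hF⟩ := S.coker_fac (S.ses_cosyz X) (u ≫ S.cosyzEpi Y)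
    (by rw [← Category.assoc, hu, Category.assoc, S.ses_zero _ _ (S.ses_cosyz Y),
      Limits.comp_zero])
  exact ⟨F, u, hu, hF.symm⟩

lemma cosyzPair_id (X : B) : S.IsCosyzPair (𝟙 X) (𝟙 (S.cosyz X)) :=
  ⟨𝟙 (S.I X), by simp, by simp⟩

lemma cosyzPair_comp {X Y Z : B} {f : X ⟶ Y} {g : Y ⟶ Z} {F G}
    (hf : S.IsCosyzPair f F) (hg : S.IsCosyzPair g G) : S.IsCosyzPair (f ≫ g) (F ≫ G) := by
  obtain ⟨u, hu1, hu2⟩ := hf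
  obtain ⟨v, hv1, hv2⟩ := hg
  refine ⟨u ≫ v, ?_, ?_⟩
  · rw [← Category.assoc, hu1, Category.assoc, hv1, ← Category.assoc]
  · rw [Category.assoc, hv2, ← Category.assoc, hu2, Category.assoc]

lemma cosyzPair_sub {X Y : B} {f f' : X ⟶ Y} {F F'}
    (hf : S.IsCosyzPair f F) (hf' : S.IsCosyzPair f' F') :
    S.IsCosyzPair (f - f') (F - F') := by
  obtain ⟨u, hu1, hu2⟩ := hf
  obtain ⟨u', hu1', hu2'⟩ := hf'
  refine ⟨u - u', ?_, ?_⟩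
  · rw [Preadditive.comp_sub, Preadditive.sub_comp, hu1, hu1']
  · rw [Preadditive.sub_comp, Preadditive.comp_sub, hu2, hu2']

lemma cosyzPair_zero_of_mem {X Y : B} {f : X ⟶ Y} (hf : f ∈ S.projIdeal X Y) :
    S.IsCosyzPair f 0 := by
  suffices h : ∃ u : S.I X ⟶ S.I Y, S.en X ≫ u = f ≫ S.en Y ∧ u ≫ S.cosyzEpi Y = 0 by
    obtain ⟨u, h1, h2⟩ := h
    exact ⟨u, h1, by rw [h2, Limits.comp_zero]⟩
  induction hf using Submodule.span_induction with
  | mem q hq =>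
    obtain ⟨Q, a, b, hQ, rfl⟩ := hq
    obtain ⟨A, hA⟩ := S.proj_ext hQ (S.ses_cosyz X) a
    refine ⟨A ≫ b ≫ S.en Y, ?_, ?_⟩
    · rw [← Category.assoc, hA, Category.assoc]
    · rw [Category.assoc, Category.assoc, S.ses_zero _ _ (S.ses_cosyz Y)]
      simp
  | zero => exact ⟨0, by simp, by simp⟩
  | add q q' _ _ hq hq' =>
    obtain ⟨u, h1, h2⟩ := hq; obtain ⟨u', h1', h2'⟩ := hq'
    exact ⟨u + u', by rw [Preadditive.comp_add, Preadditive.add_comp, h1, h1'],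
      by rw [Preadditive.add_comp, h2, h2', add_zero]⟩
  | smul a q _ hq =>
    obtain ⟨u, h1, h2⟩ := hq
    exact ⟨a • u, by rw [Linear.comp_smul, Linear.smul_comp, h1],
      by rw [Linear.smul_comp, h2, smul_zero]⟩

lemma cosyzPair_sub_mem {X Y : B} {f : X ⟶ Y} {F F'}
    (h : S.IsCosyzPair f F) (h' : S.IsCosyzPair f F') :
    F - F' ∈ S.projIdeal (S.cosyz X) (S.cosyz Y) := by
  obtain ⟨u, hu1, hu2⟩ := h
  obtain ⟨u', hu1', hu2'⟩ := h'
  have h1 : S.en X ≫ (u - u') = 0 := by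
    rw [Preadditive.comp_sub, hu1, hu1', sub_self]
  obtain ⟨w, hw⟩ := S.coker_fac (S.ses_cosyz X) _ h1
  have h2 : S.cosyzEpi X ≫ (F - F') = S.cosyzEpi X ≫ (w ≫ S.cosyzEpi Y) := by
    rw [Preadditive.comp_sub, ← hu2, ← hu2', ← Preadditive.sub_comp, ← hw, Category.assoc]
  rw [S.ses_epi' (S.ses_cosyz X) h2]
  exact S.mem_projIdeal_of_factor (S.projI Y) w (S.cosyzEpi Y)

lemma cosyzPair_mem {X Y : B} {f : X ⟶ Y} {F} (hf : f ∈ S.projIdeal X Y)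
    (h : S.IsCosyzPair f F) : F ∈ S.projIdeal (S.cosyz X) (S.cosyz Y) := by
  have := S.cosyzPair_sub_mem h (S.cosyzPair_zero_of_mem hf)
  simpa using this

lemma stIso_cosyz_congr {X Y : B} (h : S.StIso X Y) : S.StIso (S.cosyz X) (S.cosyz Y) := by
  obtain ⟨f, g, h1, h2⟩ := h
  obtain ⟨F, hF⟩ := S.cosyzPair_exists f
  obtain ⟨G, hG⟩ := S.cosyzPair_exists g
  refine ⟨F, G, ?_, ?_⟩
  · exact S.cosyzPair_mem h1 (S.cosyzPair_sub (S.cosyzPair_comp hF hG) (S.cosyzPair_id X))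
  · exact S.cosyzPair_mem h2 (S.cosyzPair_sub (S.cosyzPair_comp hG hF) (S.cosyzPair_id Y))

lemma stIso_cosyz_iter_congr (n : ℕ) {X Y : B} (h : S.StIso X Y) :
    S.StIso (S.cosyz^[n] X) (S.cosyz^[n] Y) := by
  induction n with
  | zero => simpa using h
  | succ n ih =>
    rw [Function.iterate_succ_apply', Function.iterate_succ_apply']
    exact S.stIso_cosyz_congr ih

lemma stIso_cancel (n : ℕ) (Z : B) : S.StIso (S.cosyz^[n] (S.syz^[n] Z)) Z := by
  induction n generalizing Z with
  | zero => exact S.stIso_refl Z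
  | succ n ih =>
    rw [Function.iterate_succ_apply' S.cosyz, Function.iterate_succ_apply S.syz]
    exact S.stIso_trans (S.stIso_cosyz_congr (ih (S.syz Z))) (S.stIso_cosyz_syz Z)

lemma sVanish_step {X Y : B} (h : S.sVanish X (S.syz Y)) : S.sVanish (S.cosyz X) Y := by
  have h1 : S.sVanish (S.syz (S.cosyz X)) (S.syz Y) :=
    S.sVanish_congr_left (S.stIso_symm (S.stIso_syz_cosyz X)) h
  have h2 : S.sVanish (S.cosyz X) (S.cosyz (S.syz Y)) := S.sVanish_syz_to_cosyz h1
  exact S.sVanish_congr_right (S.stIso_cosyz_syz Y) h2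

lemma sVanish_steps (n : ℕ) {X Y : B} (h : S.sVanish X (S.syz^[n] Y)) :
    S.sVanish (S.cosyz^[n] X) Y := by
  induction n generalizing X Y with
  | zero => simpa using h
  | succ n ih =>
    rw [Function.iterate_succ_apply] at h
    rw [Function.iterate_succ_apply']
    exact S.sVanish_step (ih h)

/-- The key vanishing: for `c₀ ∈ C`, `Y ∈ C` and `1 ≤ a ≤ d-1`,
`B̄(Σ^a c₀, Y) = 0`. -/
lemma vanish_cosyz_iter {d : ℕ} {C : Set B} (hmax : S.MaxOrthogonal C d)
    (hstab : S.ShiftStable C d) {c₀ : B} (hc₀ : c₀ ∈ C) {Y : B} (hY : Y ∈ C)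
    {a : ℕ} (ha1 : 1 ≤ a) (ha2 : a + 1 ≤ d) : S.sVanish (S.cosyz^[a] c₀) Y := by
  obtain ⟨C₁, hC₁, hiso⟩ := hstab Y hY
  have h1 : S.sVanish (S.syz^[d - a] c₀) C₁ :=
    (hmax.1 c₀).mp hc₀ (d - a) (by omega) (by omega) C₁ hC₁
  have h2 : S.sVanish (S.syz^[d - a] c₀) (S.syz^[d] Y) :=
    S.sVanish_congr_right (S.stIso_symm hiso) h1
  have h3 : S.sVanish (S.cosyz^[d] (S.syz^[d - a] c₀)) Y := S.sVanish_steps d h2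
  refine S.sVanish_congr_left ?_ h3
  set n := d - a with hn
  have hd' : d = a + n := by omega
  rw [hd', Function.iterate_add_apply]
  exact S.stIso_cosyz_iter_congr a (S.stIso_cancel n c₀)

end Aux3

end FrobeniusSetup

namespace FrobeniusSetup

/-- Cycle condition in degree `m` with respect to the complex `g`. -/
def CycCond {B : Type u} [Category.{v} B] [Preadditive B] (Cobj : ℕ → B)
    (g : ∀ i : ℕ, Cobj (i + 1) ⟶ Cobj i) (X : B) : ∀ m : ℕ, (X ⟶ Cobj m) → Prop
  | 0, _ => True
  | m' + 1, t => t ≫ g m' = 0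

end FrobeniusSetup

open FrobeniusSetup in
/-- Theorem 2.5(2).  Given `M ∈ mod-C̄` with a projective
resolution `0 → B(-,C_{d+1}) → ⋯ → B(-,C₀) → M → 0` in `mod-C` as in
Theorem 2.5(1), the induced sequence of functors on `C̄`
`0 → Tor^C_{d+1}(M,C̄) → B̄(-,C_{d+1}) → ⋯ → B̄(-,C₀) → M → 0` is exact.
Here `Tor^C_{d+1}(M,C̄)` is (computed from this resolution as) the kernel of
the induced map `B̄(-,C_{d+1}) → B̄(-,C_d)`, so exactness of the displayed
sequence at `Tor^C_{d+1}(M,C̄)` and at `B̄(-,C_{d+1})` holds by definition of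
the kernel; the remaining exactness assertions are the content below.  Hence
the sequence gives the first `d+2` terms of a projective resolution of `M` in
`mod-C̄`. -/
theorem stmt8_induced_stable_resolution_exact
    {k : Type} [Field k] {B : Type u} [Category.{v} B] [Preadditive B]
    [CategoryTheory.Linear k B] [HasFiniteBiproducts B] [HasBinaryBiproducts B]
    (S : FrobeniusSetup k B) (d : ℕ) (hd : 2 ≤ d) (C : Set B)
    (hff : S.FunctoriallyFinite C) (hmax : S.MaxOrthogonal C d)
    (hstab : S.ShiftStable C d)
    (M : (ObjectProperty.FullSubcategory (· ∈ C))ᵒᵖ ⥤ ModuleCat k) (hM : S.IsFPStable C M)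
    (Cobj : ℕ → B) (hC : ∀ i, i ≤ d + 1 → Cobj i ∈ C)
    (g : ∀ i : ℕ, Cobj (i + 1) ⟶ Cobj i) (ε : LinRep (k := k) C (Cobj 0) ⟶ M)
    (hres : ∀ c, Function.Surjective (ε.app c) ∧
      Function.Exact ((lMap (k := k) C (g 0)).app c) (ε.app c) ∧
      (∀ i, i < d → Function.Exact ((lMap (k := k) C (g (i + 1))).app c)
        ((lMap (k := k) C (g i)).app c)) ∧
      Function.Injective ((lMap (k := k) C (g d)).app c)) :
    ∀ c : (ObjectProperty.FullSubcategory (· ∈ C))ᵒᵖ,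
      -- `ε` descends to the stable quotients and remains surjective
      Function.Surjective (ε.app c) ∧
      -- exactness at `B̄(-,C₀)` (representative-wise)
      (∀ y : c.unop.obj ⟶ Cobj 0, ε.app c y = 0 ↔
        ∃ x : c.unop.obj ⟶ Cobj 1, y - x ≫ g 0 ∈ S.projIdeal c.unop.obj (Cobj 0)) ∧
      -- exactness at `B̄(-,C_i)` for `1 ≤ i ≤ d`
      (∀ i, i < d → Function.Exact ((S.sMap C (g (i + 1))).app c)
        ((S.sMap C (g i)).app c)) := by
  -- preliminary consequences of the hypotheses
  have hgz : ∀ j : ℕ, j + 1 ≤ d → g (j + 1) ≫ g j = 0 := by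
    intro j hj
    have hc2 : Cobj (j + 2) ∈ C := hC (j + 2) (by omega)
    have hE := (hres (Opposite.op ⟨Cobj (j + 2), hc2⟩)).2.2.1 j (by omega)
    have hr : g (j + 1) ∈ Set.range
        ((lMap (k := k) C (g (j + 1))).app (Opposite.op ⟨Cobj (j + 2), hc2⟩)) :=
      ⟨𝟙 (Cobj (j + 2)), Category.id_comp _⟩
    exact (Category.id_comp (g (j+1))) ▸ ((hE (g (j + 1))).mpr hr)
  -- M vanishes on projective objects
  have hMzero : ∀ (Q : B) (hQ : S.Proj Q) (hQC : Q ∈ C)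
      (z : M.obj (Opposite.op ⟨Q, hQC⟩)), z = 0 := by
    obtain ⟨C₁', C₀', hC₁', hC₀', φ, ε', hres'⟩ := hM
    intro Q hQ hQC z
    obtain ⟨x, rfl⟩ := (hres' (Opposite.op ⟨Q, hQC⟩)).1 z
    have hx : x = 0 := by
      obtain ⟨f, rfl⟩ := Submodule.Quotient.mk_surjective _ x
      exact (Submodule.Quotient.mk_eq_zero _).mpr (S.mem_projIdeal_of_proj hQ f)
    rw [hx, map_zero]
  -- M kills morphisms in the projective ideal
  have hMkill : ∀ (b b' : (ObjectProperty.FullSubcategory (· ∈ C))ᵒᵖ) (u : b ⟶ b'),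
      (u.unop.hom : b'.unop.obj ⟶ b.unop.obj) ∈ S.projIdeal b'.unop.obj b.unop.obj →
      ∀ z : M.obj b, M.map u z = 0 := by
    obtain ⟨C₁', C₀', hC₁', hC₀', φ, ε', hres'⟩ := hM
    intro b b' u hu z
    obtain ⟨x, rfl⟩ := (hres' b).1 z
    have h1 : (S.SRep C C₀').map u x = 0 := by
      obtain ⟨f, rfl⟩ := Submodule.Quotient.mk_surjective _ x
      exact (Submodule.Quotient.mk_eq_zero _).mpr (S.projIdeal_postcomp hu f)
    have h2 := congrArg (fun φ => φ x) (ε'.naturality u)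
    have h3 : M.map u (ε'.app b x) = ε'.app b' ((S.SRep C C₀').map u x) := h2.symm
    rw [h3, h1, map_zero]
  -- ε kills the projective ideal
  have hεkill : ∀ (c : (ObjectProperty.FullSubcategory (· ∈ C))ᵒᵖ) (p : c.unop.obj ⟶ Cobj 0),
      p ∈ S.projIdeal c.unop.obj (Cobj 0) → ε.app c p = 0 := by
    intro c p hp
    let c₀ : ObjectProperty.FullSubcategory (· ∈ C) := ⟨Cobj 0, hC 0 (by omega)⟩
    let u : c.unop ⟶ c₀ := ObjectProperty.homMk p
    have h1 := congrArg (fun φ => φ (𝟙 (Cobj 0))) (ε.naturality u.op)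
    have h2 : ε.app c (p ≫ 𝟙 (Cobj 0)) = M.map u.op (ε.app (Opposite.op c₀) (𝟙 (Cobj 0))) :=
      h1
    rw [Category.comp_id] at h2
    rw [h2]
    exact hMkill (Opposite.op c₀) c u.op hp _
  -- the key inductive lifting lemma (Tor-vanishing)
  have LP : ∀ (m : ℕ) (X : B), S.I X ∈ C →
      (∀ r n : ℕ, 1 ≤ r → r ≤ m → n ≤ d + 1 → S.sVanish (S.cosyz^[r] X) (Cobj n)) →
      m + 1 ≤ d →
      ∀ t : X ⟶ Cobj m, t ∈ S.projIdeal X (Cobj m) →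
      CycCond Cobj g X m t →
      ∃ W : S.I X ⟶ Cobj (m + 1), S.en X ≫ (W ≫ g m) = t := by
    intro m
    induction m with
    | zero =>
      intro X hIC hvan hb t ht _
      obtain ⟨H, hH⟩ := S.projIdeal_ext (S.ses_cosyz X) ht
      have hε0 : ε.app (Opposite.op ⟨S.I X, hIC⟩) H = 0 :=
        hMzero (S.I X) (S.projI X) hIC _
      obtain ⟨W, hW⟩ := ((hres (Opposite.op ⟨S.I X, hIC⟩)).2.1 H).mp hε0
      refine ⟨W, ?_⟩
      have hW' : W ≫ g 0 = H := hW
      rw [hW', hH]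
    | succ m ih =>
      intro X hIC hvan hb t ht hcyc
      have hcyc0 : t ≫ g m = 0 := hcyc
      obtain ⟨H, hH⟩ := S.projIdeal_ext (S.ses_cosyz X) ht
      have h1 : S.en X ≫ (H ≫ g m) = 0 := by rw [← Category.assoc, hH, hcyc0]
      obtain ⟨t₁, ht₁⟩ := S.coker_fac (S.ses_cosyz X) (H ≫ g m) h1
      have ht₁P : t₁ ∈ S.projIdeal (S.cosyz X) (Cobj m) := by
        have hv := hvan 1 m (le_refl 1) (by omega) (by omega)
        rw [Function.iterate_one] at hv
        exact S.mem_of_sVanish hv t₁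
      have ht₁cyc : CycCond Cobj g (S.cosyz X) m t₁ := by
        cases m with
        | zero => trivial
        | succ m' =>
          show t₁ ≫ g m' = 0
          apply S.ses_epi' (S.ses_cosyz X)
          rw [Limits.comp_zero, ← Category.assoc, ht₁, Category.assoc,
            hgz m' (by omega), Limits.comp_zero]
      obtain ⟨W', hW'⟩ := ih (S.cosyz X) (S.proj_mem_C hmax (S.projI _))
        (fun r n hr hrm hn => by
          rw [← Function.iterate_succ_apply]
          exact hvan (r + 1) n (by omega) (by omega) hn)
        (by omega) t₁ ht₁P ht₁cyc
      have h2 : (H - S.cosyzEpi X ≫ (S.en (S.cosyz X) ≫ W')) ≫ g m = 0 := by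
        rw [Preadditive.sub_comp, Category.assoc, Category.assoc, hW', ht₁, sub_self]
      have hE := (hres (Opposite.op ⟨S.I X, hIC⟩)).2.2.1 m (by omega)
      have h2' : ((lMap (k := k) C (g m)).app (Opposite.op ⟨S.I X, hIC⟩))
          (H - S.cosyzEpi X ≫ (S.en (S.cosyz X) ≫ W')) = 0 := h2
      obtain ⟨W, hW⟩ := (hE _).mp h2'
      refine ⟨W, ?_⟩
      have hW2 : W ≫ g (m + 1) = H - S.cosyzEpi X ≫ (S.en (S.cosyz X) ≫ W') := hW
      rw [hW2, Preadditive.comp_sub, hH, ← Category.assoc,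
        S.ses_zero _ _ (S.ses_cosyz X), Limits.zero_comp, sub_zero]
  -- now the three assertions
  intro c
  refine ⟨(hres c).1, ?_, ?_⟩
  · -- exactness at B̄(-,C₀)
    intro y
    constructor
    · intro hy
      obtain ⟨x, hx⟩ := ((hres c).2.1 y).mp hy
      refine ⟨x, ?_⟩
      have hx' : x ≫ g 0 = y := hx
      rw [hx', sub_self]
      exact zero_mem _
    · rintro ⟨x, hx⟩
      have h1 : ε.app c (y - x ≫ g 0) = 0 := hεkill c _ hx
      have h2 : ε.app c (x ≫ g 0) = 0 :=
        ((hres c).2.1 (x ≫ g 0)).mpr ⟨x, rfl⟩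
      have h3 : ε.app c y = ε.app c (y - x ≫ g 0) + ε.app c (x ≫ g 0) := by
        exact (congrArg (ε.app c).hom (sub_add_cancel y (x ≫ g 0))).symm.trans
          ((ε.app c).hom.map_add _ _)
      rw [h3, h1, h2, add_zero]
  · -- exactness at B̄(-,C_{i+1}) for i < d
    intro i hi y
    obtain ⟨x, rfl⟩ := Submodule.Quotient.mk_surjective _ y
    constructor
    · intro h0
      have hx : x ≫ g i ∈ S.projIdeal c.unop.obj (Cobj i) := by
        have h0' : (Submodule.Quotient.mk (x ≫ g i) :
            S.sHom c.unop.obj (Cobj i)) = 0 := h0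
        exact (Submodule.Quotient.mk_eq_zero _).mp h0'
      have hvan : ∀ r n : ℕ, 1 ≤ r → r ≤ i → n ≤ d + 1 →
          S.sVanish (S.cosyz^[r] c.unop.obj) (Cobj n) :=
        fun r n hr hri hn =>
          S.vanish_cosyz_iter hmax hstab c.unop.property (hC n hn) hr (by omega)
      have hcyc : CycCond Cobj g c.unop.obj i (x ≫ g i) := by
        cases i with
        | zero => trivial
        | succ m' =>
          show (x ≫ g (m' + 1)) ≫ g m' = 0
          rw [Category.assoc, hgz m' (by omega), Limits.comp_zero]
      obtain ⟨W, hW⟩ := LP i c.unop.obj (S.proj_mem_C hmax (S.projI _)) hvan (by omega)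
        (x ≫ g i) hx hcyc
      have hE := (hres c).2.2.1 i hi
      have h3 : ((lMap (k := k) C (g i)).app c) (x - S.en c.unop.obj ≫ W) = 0 := by
        have : (x - S.en c.unop.obj ≫ W) ≫ g i = 0 := by
          rw [Preadditive.sub_comp, Category.assoc, hW, sub_self]
        exact this
      obtain ⟨y', hy'⟩ := (hE _).mp h3
      refine ⟨Submodule.Quotient.mk y', ?_⟩
      have hy2 : y' ≫ g (i + 1) = x - S.en c.unop.obj ≫ W := hy'
      show (Submodule.Quotient.mk (y' ≫ g (i + 1)) : S.sHom c.unop.obj (Cobj (i + 1)))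
        = Submodule.Quotient.mk x
      rw [Submodule.Quotient.eq]
      rw [hy2]
      have he : x - S.en c.unop.obj ≫ W - x = -(S.en c.unop.obj ≫ W) := by abel
      rw [he]
      exact neg_mem (S.mem_projIdeal_of_factor (S.projI _) (S.en c.unop.obj) W)
    · rintro ⟨w, hw⟩
      obtain ⟨y', rfl⟩ := Submodule.Quotient.mk_surjective _ w
      have hw' : (Submodule.Quotient.mk (y' ≫ g (i + 1)) :
          S.sHom c.unop.obj (Cobj (i + 1))) = Submodule.Quotient.mk x := hw
      have hmem : y' ≫ g (i + 1) - x ∈ S.projIdeal c.unop.obj (Cobj (i + 1)) :=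
        (Submodule.Quotient.eq _).mp hw'
      show (Submodule.Quotient.mk (x ≫ g i) : S.sHom c.unop.obj (Cobj i)) = 0
      rw [Submodule.Quotient.mk_eq_zero]
      have he : x ≫ g i = -((y' ≫ g (i + 1) - x) ≫ g i) + (y' ≫ g (i + 1)) ≫ g i := by
        rw [Preadditive.sub_comp]
        abel
      rw [he, Category.assoc, hgz i (by omega), Limits.comp_zero, add_zero]
      exact neg_mem (S.projIdeal_postcomp hmem (g i))
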